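/- Let f ∈ WRPB with W_f(ω) = ε √(p*)^{m+s} ζ_p^{f*(ω)} for all ω ∈ S_f. Then there exists a positive even integer l with gcd(l−1, p−1) = 1 such that f*(aω) = a^l f*(ω) for every a ∈ F_p^* and ω ∈ S_f. -/

import Mathlib

open scoped BigOperators Classical

noncomputable section

/-- The primitive `p`-th root of unity `ζ_p = exp(2πi/p)` in `ℂ`. -/
def zetaC (p : ℕ) : ℂ := Complex.exp (2 * Real.pi * Complex.I / p)

/-- The additive character `a ↦ ζ_p^a` of `ZMod p` with values in `ℂ`. -/
def chi (p : ℕ) (a : ZMod p) : ℂ := zetaC p ^ a.val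

/-- The principal square root of `p* = η₀(-1)·p`:  `√p` if `p ≡ 1 (mod 4)`,
and `i·√p` if `p ≡ 3 (mod 4)`. -/
def sqrtPstar (p : ℕ) : ℂ :=
  if p % 4 = 1 then (Real.sqrt p : ℂ) else Complex.I * (Real.sqrt p : ℂ)

/-- The Walsh transform `W_f(ω) = ∑_x ζ_p^{f(x) - Tr(ωx)}` of `f : F → ZMod p`,
where `F` is a finite field of characteristic `p` and `Tr` is the trace to `ZMod p`. -/
def walsh (p : ℕ) {F : Type} [Field F] [Fintype F] [Algebra (ZMod p) F]
    (f : F → ZMod p) (ω : F) : ℂ :=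
  ∑ x : F, chi p (f x - Algebra.trace (ZMod p) F (ω * x))

/-- `f` is a weakly regular `s`-plateaued *balanced* function in the class WRPB:
balanced, `f(0)=0`, homogeneous of even degree `t` with `gcd(t-1,p-1)=1`,
and weakly regular with sign `ε` and dual function `fstar` on the Walsh support. -/
structure IsWRPB (p m s : ℕ) {F : Type} [Field F] [Fintype F] [Algebra (ZMod p) F]
    (f : F → ZMod p) (ε : ℤ) (fstar : F → ZMod p) : Prop where
  card_eq : Fintype.card F = p ^ m
  plateaued : ∀ ω : F, ‖walsh p f ω‖ ^ 2 = 0 ∨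
      ‖walsh p f ω‖ ^ 2 = (p : ℝ) ^ (m + s)
  balanced : walsh p f 0 = 0
  map_zero : f 0 = 0
  homog : ∃ t : ℕ, Even t ∧ 0 < t ∧ Nat.gcd (t - 1) (p - 1) = 1 ∧
      ∀ a : ZMod p, a ≠ 0 → ∀ x : F, f (algebraMap (ZMod p) F a * x) = a ^ t * f x
  sign : ε = 1 ∨ ε = -1
  weakly_regular : ∀ ω : F, ‖walsh p f ω‖ ^ 2 = (p : ℝ) ^ (m + s) →
      walsh p f ω = (ε : ℂ) * sqrtPstar p ^ (m + s) * chi p (fstar ω)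
  fstar_eq_zero : ∀ ω : F, ‖walsh p f ω‖ ^ 2 ≠ (p : ℝ) ^ (m + s) → fstar ω = 0

/-! ### Auxiliary lemmas -/

section Aux

open Polynomial

variable {p : ℕ} [hpF : Fact p.Prime]

lemma zetaC_pow_self (hp : p ≠ 0) : zetaC p ^ p = 1 := by
  have hpc : (p : ℂ) ≠ 0 := Nat.cast_ne_zero.mpr hp
  rw [zetaC, ← Complex.exp_nat_mul,
    show (p : ℂ) * (2 * Real.pi * Complex.I / p) = 2 * Real.pi * Complex.I by
      field_simp]
  exact Complex.exp_two_pi_mul_I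

lemma zetaC_prim : IsPrimitiveRoot (zetaC p) p :=
  Complex.isPrimitiveRoot_exp p hpF.out.ne_zero

lemma chi_apply_mul (a b : ZMod p) : chi p (a * b) = zetaC p ^ (a.val * b.val) := by
  haveI : NeZero p := ⟨hpF.out.ne_zero⟩
  rw [chi, ZMod.val_mul, ← pow_eq_pow_mod _ (zetaC_pow_self hpF.out.ne_zero)]

lemma abs_zetaC : ‖zetaC p‖ = 1 := by
  have h : zetaC p = Complex.exp (((2 * Real.pi / p : ℝ) : ℂ) * Complex.I) := by
    rw [zetaC]; push_cast; ring
  rw [h, Complex.norm_exp]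
  simp

lemma abs_chi (a : ZMod p) : ‖chi p a‖ = 1 := by
  rw [chi, norm_pow, abs_zetaC, one_pow]

lemma abs_sqrtPstar_sq : ‖sqrtPstar p‖ ^ 2 = (p : ℝ) := by
  rw [sqrtPstar]
  split
  · rw [Complex.norm_real, Real.norm_of_nonneg (Real.sqrt_nonneg _),
      Real.sq_sqrt (Nat.cast_nonneg p)]
  · rw [norm_mul, Complex.norm_I, one_mul, Complex.norm_real,
      Real.norm_of_nonneg (Real.sqrt_nonneg _), Real.sq_sqrt (Nat.cast_nonneg p)]

lemma sqrtPstar_ne_zero : sqrtPstar p ≠ 0 := by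
  have hpos : (0 : ℝ) < Real.sqrt p := Real.sqrt_pos.mpr (by exact_mod_cast hpF.out.pos)
  rw [sqrtPstar]
  split
  · exact Complex.ofReal_ne_zero.mpr hpos.ne'
  · exact mul_ne_zero Complex.I_ne_zero (Complex.ofReal_ne_zero.mpr hpos.ne')

lemma chi_injective : Function.Injective (chi p) := by
  haveI : NeZero p := ⟨hpF.out.ne_zero⟩
  intro x y hxy
  exact ZMod.val_injective p (zetaC_prim.pow_inj (ZMod.val_lt x) (ZMod.val_lt y) hxy)

/-- The key Galois-transfer lemma: if a sum of `p`-th roots of unity equals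
`ε √(p*)^n ζ^v` then multiplying all exponents by a nonzero square `c` multiplies
`v` by `c` as well. -/
lemma key_transfer (hodd : Odd p) (n : ℕ) (ε : ℤ)
    {ι : Type} [Fintype ι] (u : ι → ZMod p) (v : ZMod p) (b c : ZMod p) (hb : b ≠ 0)
    (hbc : b ^ 2 = c)
    (h : ∑ i, chi p (u i) = (ε : ℂ) * sqrtPstar p ^ n * chi p v) :
    ∑ i, chi p (c * u i) = (ε : ℂ) * sqrtPstar p ^ n * chi p (c * v) := by
  have hp := hpF.out
  have hp0 : p ≠ 0 := hp.ne_zero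
  haveI : NeZero p := ⟨hp0⟩
  have hp2 : p ≠ 2 := by rcases hodd with ⟨k, hk⟩; omega
  have hchar2 : ringChar (ZMod p) ≠ 2 := by rw [ZMod.ringChar_zmod_n]; exact hp2
  have hc0 : c ≠ 0 := by rw [← hbc]; exact pow_ne_zero _ hb
  set η := quadraticChar (ZMod p) with hηdef
  set ζ := zetaC p with hζdef
  have hζp : ζ ^ p = 1 := zetaC_pow_self hp0
  have hζprim : IsPrimitiveRoot ζ p := zetaC_prim
  set ψ : AddChar (ZMod p) ℂ := AddChar.zmodChar p hζp with hψdef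
  have hψprim : ψ.IsPrimitive := AddChar.zmodChar_primitive_of_primitive_root p hζprim
  set χC : MulChar (ZMod p) ℂ := η.ringHomComp (Int.castRingHom ℂ) with hχCdef
  have hχ1 : χC ≠ 1 :=
    (MulChar.ringHomComp_ne_one_iff (fun a b hab => Int.cast_injective hab)).mpr
      (quadraticChar_ne_one hchar2)
  have hχ2 : χC.IsQuadratic := (quadraticChar_isQuadratic (ZMod p)).comp _
  -- the Gauss sum
  set g : ℂ := ∑ x : ZMod p, ((η x : ℤ) : ℂ) * ζ ^ x.val with hgdef
  have hgGauss : g = gaussSum χC ψ := by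
    rw [hgdef, gaussSum]
    refine Finset.sum_congr rfl fun x _ => ?_
    rw [hχCdef, MulChar.ringHomComp_apply, hψdef, AddChar.zmodChar_apply]
    norm_num
  have hg_sq : g ^ 2 = ((η (-1) : ℤ) : ℂ) * p := by
    rw [hgGauss, gaussSum_sq hχ1 hχ2 hψprim]
    rw [hχCdef, MulChar.ringHomComp_apply, ZMod.card]
    norm_num
  have hη4 : η (-1) = ZMod.χ₄ p := by
    rw [hηdef, quadraticChar_neg_one hchar2, ZMod.card]
  have hp4 : p % 4 = 1 ∨ p % 4 = 3 := by rcases hodd with ⟨k, hk⟩; omega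
  have hs_sq : sqrtPstar p ^ 2 = ((η (-1) : ℤ) : ℂ) * p := by
    rw [hη4]
    rcases hp4 with h4 | h4
    · rw [sqrtPstar, if_pos h4, ZMod.χ₄_nat_one_mod_four h4, ← Complex.ofReal_pow,
        Real.sq_sqrt (Nat.cast_nonneg p)]
      push_cast; ring
    · have hne : ¬ p % 4 = 1 := by omega
      rw [sqrtPstar, if_neg hne, ZMod.χ₄_nat_three_mod_four h4, mul_pow, Complex.I_sq,
        ← Complex.ofReal_pow, Real.sq_sqrt (Nat.cast_nonneg p)]
      push_cast; ring
  have hgs : g ^ 2 = sqrtPstar p ^ 2 := by rw [hg_sq, hs_sq]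
  obtain ⟨δ, hδg⟩ : ∃ δ : ℤ, sqrtPstar p = (δ : ℂ) * g := by
    have h2 : (g - sqrtPstar p) * (g + sqrtPstar p) = 0 := by linear_combination hgs
    rcases mul_eq_zero.mp h2 with h' | h'
    · exact ⟨1, by push_cast; linear_combination -h'⟩
    · exact ⟨-1, by push_cast; linear_combination h'⟩
  -- the abstract cyclotomic field
  haveI : Fact (Irreducible (cyclotomic p ℚ)) := ⟨cyclotomic.irreducible_rat hp.pos⟩
  have mk : ∀ z : ℂ, IsPrimitiveRoot z p →
      ∃ φ : AdjoinRoot (cyclotomic p ℚ) →+* ℂ, φ (AdjoinRoot.root _) = z := by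
    intro z hz
    have hroot : (cyclotomic p ℚ).eval₂ (algebraMap ℚ ℂ) z = 0 := by
      rw [eval₂_eq_eval_map, map_cyclotomic]
      exact hz.isRoot_cyclotomic hp.pos
    exact ⟨AdjoinRoot.lift _ _ hroot, AdjoinRoot.lift_root hroot⟩
  obtain ⟨φ, hφ⟩ := mk ζ hζprim
  have hcop : Nat.Coprime c.val p := ZMod.val_coe_unit_coprime (Units.mk0 c hc0)
  obtain ⟨φc, hφc⟩ := mk (ζ ^ c.val) (hζprim.pow_of_coprime c.val hcop)
  set r : AdjoinRoot (cyclotomic p ℚ) := AdjoinRoot.root (cyclotomic p ℚ) with hrdef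
  set SK : AdjoinRoot (cyclotomic p ℚ) := ∑ i, r ^ (u i).val with hSKdef
  set gK : AdjoinRoot (cyclotomic p ℚ) := ∑ x : ZMod p, ((η x : ℤ) : _) * r ^ x.val
    with hgKdef
  have hphiS : φ SK = ∑ i, chi p (u i) := by
    rw [hSKdef, map_sum]
    exact Finset.sum_congr rfl fun i _ => by rw [map_pow, hφ]; rfl
  have hφg : φ gK = g := by
    rw [hgKdef, map_sum, hgdef]
    exact Finset.sum_congr rfl fun x _ => by rw [map_mul, map_pow, hφ, map_intCast]
  have hφv : φ (r ^ v.val) = chi p v := by rw [map_pow, hφ]; rfl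
  have hKeq : SK = ((ε * δ ^ n : ℤ) : AdjoinRoot (cyclotomic p ℚ)) * gK ^ n * r ^ v.val := by
    apply φ.injective
    rw [hphiS, map_mul, map_mul, map_pow, hφg, map_intCast, hφv, h, hδg]
    push_cast; ring
  -- apply the second embedding
  have hζc : ∀ w : ZMod p, φc (r ^ w.val) = chi p (c * w) := by
    intro w
    rw [map_pow, hφc, ← pow_mul, chi_apply_mul]
  have hphicS : φc SK = ∑ i, chi p (c * u i) := by
    rw [hSKdef, map_sum]
    exact Finset.sum_congr rfl fun i _ => hζc _
  have hηc : η c = 1 := by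
    rw [← hbc, map_pow]
    exact quadraticChar_sq_one hb
  have hφcg : φc gK = g := by
    rw [hgKdef, map_sum]
    have step : (∑ x : ZMod p, φc (((η x : ℤ) : _) * r ^ x.val)) =
        ∑ x : ZMod p, ((η x : ℤ) : ℂ) * chi p (c * x) :=
      Finset.sum_congr rfl fun x _ => by rw [map_mul, map_intCast, hζc]
    rw [step, hgdef]
    refine Fintype.sum_equiv (Equiv.mulLeft₀ c hc0) _ _ fun x => ?_
    simp only [Equiv.mulLeft₀_apply]
    rw [map_mul, hηc, one_mul, chi]
  have hfin := congrArg φc hKeq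
  rw [hphicS, map_mul, map_mul, map_pow, hφcg, map_intCast, hζc v] at hfin
  rw [hfin, hδg]
  push_cast; ring

end Aux

/-- For `f ∈ WRPB`, the dual function `f*` is also homogeneous: there is a positive even
integer `l` with `gcd(l-1, p-1) = 1` such that `f*(aω) = a^l f*(ω)` for all nonzero
`a ∈ F_p` and all `ω` in the Walsh support. -/
theorem stmt2 (p m s : ℕ) [Fact p.Prime] (hodd : Odd p) (hm : 0 < m)
    (F : Type) [Field F] [Fintype F] [Algebra (ZMod p) F]
    (f : F → ZMod p) (ε : ℤ) (fstar : F → ZMod p)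
    (hf : IsWRPB p m s f ε fstar) :
    ∃ l : ℕ, Even l ∧ 0 < l ∧ Nat.gcd (l - 1) (p - 1) = 1 ∧
      ∀ a : ZMod p, a ≠ 0 → ∀ ω : F,
        ‖walsh p f ω‖ ^ 2 = (p : ℝ) ^ (m + s) →
        fstar (algebraMap (ZMod p) F a * ω) = a ^ l * fstar ω := by
  have hp := (inferInstance : Fact p.Prime).out
  haveI : NeZero p := ⟨hp.ne_zero⟩
  have hp3 : 3 ≤ p := by
    rcases hodd with ⟨k, hk⟩
    have := hp.two_le; omega
  haveI : NeZero (p - 1) := ⟨by omega⟩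
  obtain ⟨t, htE, htpos, htgcd, hthom⟩ := hf.homog
  set t1 := t - 1 with ht1def
  have ht1 : t = t1 + 1 := by omega
  have hcop : Nat.Coprime t1 (p - 1) := htgcd
  set u0 : ZMod (p - 1) := ((t1 : ℕ) : ZMod (p - 1))⁻¹ with hu0
  have hu1 : ((t1 : ℕ) : ZMod (p - 1)) * u0 = 1 := ZMod.coe_mul_inv_eq_one _ hcop
  set r : ℕ := u0.val with hrdef
  have hrmod : r * t1 ≡ 1 [MOD (p - 1)] := by
    have hcast : ((r * t1 : ℕ) : ZMod (p - 1)) = ((1 : ℕ) : ZMod (p - 1)) := by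
      rw [Nat.cast_mul, hrdef, ZMod.natCast_val, ZMod.cast_id, mul_comm, Nat.cast_one, hu1]
    exact (ZMod.natCast_eq_natCast_iff _ _ _).mp hcast
  have hpe : 2 ∣ (p - 1) := by rcases hodd with ⟨k, hk⟩; omega
  have hrodd : Odd r := by
    have h2 : r * t1 ≡ 1 [MOD 2] := Nat.ModEq.of_dvd hpe hrmod
    have : Odd (r * t1) := Nat.odd_iff.mpr (by simpa [Nat.ModEq] using h2)
    exact (Nat.odd_mul.mp this).1
  refine ⟨r + 1, hrodd.add_one, Nat.succ_pos r, ?_, ?_⟩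
  · simp only [Nat.add_sub_cancel]
    have hunit : IsUnit u0 := IsUnit.of_mul_eq_one _ (by rw [mul_comm]; exact hu1)
    have := ZMod.val_coe_unit_coprime hunit.unit
    rwa [hunit.unit_spec] at this
  intro a ha ω hω
  -- the exponent identity
  have hpowmod : ∀ x : ZMod p, x ≠ 0 → x ^ (r * t) = x ^ (r + 1) := by
    intro x hx
    have h1 : x ^ (p - 1) = 1 := ZMod.pow_card_sub_one_eq_one hx
    have he : r * t = r * t1 + r := by rw [ht1]; ring
    have hmod : r * t ≡ r + 1 [MOD (p - 1)] := by
      rw [he]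
      calc r * t1 + r ≡ 1 + r [MOD (p - 1)] := Nat.ModEq.add_right r hrmod
        _ = r + 1 := by ring
    calc x ^ (r * t) = x ^ (r * t % (p - 1)) := pow_eq_pow_mod _ h1
      _ = x ^ ((r + 1) % (p - 1)) := by rw [hmod]
      _ = x ^ (r + 1) := (pow_eq_pow_mod _ h1).symm
  set c : ZMod p := a ^ (r + 1) with hcdef
  have hc0 : c ≠ 0 := pow_ne_zero _ ha
  obtain ⟨w, hw⟩ := hrodd.add_one
  have hbsq : (a ^ w) ^ 2 = c := by
    rw [← pow_mul, hcdef]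
    congr 1
    omega
  have hbne : a ^ w ≠ 0 := pow_ne_zero _ ha
  -- the substitution x ↦ α x in the Walsh transform
  set aF := algebraMap (ZMod p) F a with haF
  set α := algebraMap (ZMod p) F (a ^ r) with hα
  have hα0 : α ≠ 0 := by
    intro h0
    refine pow_ne_zero r ha ((algebraMap (ZMod p) F).injective ?_)
    rw [map_zero, ← hα]
    exact h0
  have hTr : ∀ (d : ZMod p) (y : F),
      Algebra.trace (ZMod p) F (algebraMap (ZMod p) F d * y)
        = d * Algebra.trace (ZMod p) F y := by
    intro d y
    rw [← Algebra.smul_def, map_smul, smul_eq_mul]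
  have hsub : walsh p f (aF * ω)
      = ∑ x : F, chi p (c * (f x - Algebra.trace (ZMod p) F (ω * x))) := by
    have hsum := Equiv.sum_comp (Equiv.mulLeft₀ α hα0)
      (fun x => chi p (f x - Algebra.trace (ZMod p) F ((aF * ω) * x)))
    simp only [Equiv.mulLeft₀_apply] at hsum
    rw [walsh, ← hsum]
    refine Finset.sum_congr rfl fun x _ => ?_
    congr 1
    have h1 : f (α * x) = c * f x := by
      rw [hα, hthom _ (pow_ne_zero _ ha) x, ← pow_mul, hpowmod a ha, hcdef]
    have h2 : (aF * ω) * (α * x) = algebraMap (ZMod p) F c * (ω * x) := by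
      rw [hcdef, haF, hα, show a ^ (r + 1) = a * a ^ r from pow_succ' a r, map_mul]
      ring
    rw [h1, h2, hTr, mul_sub]
  -- apply the transfer lemma
  have hWω := hf.weakly_regular ω hω
  rw [walsh] at hWω
  have hWa : walsh p f (aF * ω)
      = (ε : ℂ) * sqrtPstar p ^ (m + s) * chi p (c * fstar ω) := by
    rw [hsub]
    exact key_transfer hodd (m + s) ε _ (fstar ω) (a ^ w) c hbne hbsq hWω
  -- `aω` is in the Walsh support
  have habs : ‖walsh p f (aF * ω)‖ ^ 2 = (p : ℝ) ^ (m + s) := by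
    rw [hWa, norm_mul, norm_mul, norm_pow]
    have h1 : ‖(ε : ℂ)‖ = 1 := by rcases hf.sign with h | h <;> simp [h]
    rw [h1, abs_chi, one_mul, mul_one, ← pow_mul, mul_comm (m + s) 2, pow_mul,
      abs_sqrtPstar_sq]
  have hW2 := hf.weakly_regular (aF * ω) habs
  rw [hWa] at hW2
  have hne : (ε : ℂ) * sqrtPstar p ^ (m + s) ≠ 0 :=
    mul_ne_zero (by rcases hf.sign with h | h <;> simp [h])
      (pow_ne_zero _ sqrtPstar_ne_zero)
  have hchieq := mul_left_cancel₀ hne hW2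
  have := chi_injective hchieq
  rw [← this, hcdef]
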